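/- Let ℰ be a valid fuzzy confidence set (E_P[ℰ^{Z^n}(Z_{n+1})] ≤ 1 for all P ∈ 𝒫), with sublevel sets C_α^{Z^n} = {z : ℰ^{Z^n}(z) < 1/α}. Then for any data-dependent (measurable, strictly positive) significance level α̃ = α̃(Z^{n+1}), it holds that E_P[1{Z_{n+1} ∉ C_{α̃}^{Z^n}} / α̃] ≤ 1 for every P ∈ 𝒫. -/

import Mathlib

open MeasureTheory
open scoped ENNReal

/-- Post-hoc validity: for a valid fuzzy confidence set `ℰ` with sublevel sets
`C_α = {z : ℰ^{z^n}(z) < 1/α}`, and any data-dependent (measurable, strictly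
positive) significance level `α̃`, the expectation of
`1{Z_{n+1} ∉ C_{α̃}} / α̃` is at most 1 under every `P` in the model. -/
theorem stmt_3 {Z : Type*} [MeasurableSpace Z] (n : ℕ)
    (model : Set (Measure ((Fin n → Z) × Z)))
    (hP : ∀ P ∈ model, IsProbabilityMeasure P)
    (E : (Fin n → Z) × Z → ℝ≥0∞) (hE : Measurable E)
    (hvalid : ∀ P ∈ model, ∫⁻ ω, E ω ∂P ≤ 1)
    (alphaTilde : (Fin n → Z) × Z → ℝ≥0∞) (halpha : Measurable alphaTilde)
    (hpos : ∀ ω, 0 < alphaTilde ω) (hfin : ∀ ω, alphaTilde ω ≠ ∞) :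
    ∀ P ∈ model,
      ∫⁻ ω, (if ω.2 ∉ {z : Z | E (ω.1, z) < 1 / alphaTilde ω} then (alphaTilde ω)⁻¹ else 0)
        ∂P ≤ 1 := by
  intro P hPm
  refine le_trans (lintegral_mono fun ω => ?_) (hvalid P hPm)
  split_ifs with h
  · exact zero_le
  · simp only [Set.mem_setOf_eq, not_lt, one_div, Prod.mk.eta] at h
    exact h
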